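/- Let n ≥ 2, 0 ≤ α ≤ 1, 0 < β < 1, and let (p'_{ij})_{i≠j} be fixed positive reals with p'_{ij} = p'_{ji} and Σ_{i≠j} p'_{ij} = 1. For points y_1, …, y_n ∈ ℝ^m, define q_{ij}(Y) = (1+‖y_i−y_j‖²)^{−1} / Σ_{k≠l} (1+‖y_k−y_l‖²)^{−1} and J(Y) = α·Σ_{i≠j} p'_{ij}·log(p'_{ij}/(β·q_{ij}+(1−β)·p'_{ij})) + (1−α)·Σ_{i≠j} q_{ij}·log(q_{ij}/(β·p'_{ij}+(1−β)·q_{ij})). Then J is differentiable in Y and its gradient with respect to y_i equals 4·Σ_{j≠i} (y_i−y_j)·(1+‖y_i−y_j‖²)^{−1}·q_{ij}·[ αβ·p'_{ij}/(β·q_{ij}+(1−β)·p'_{ij}) − Σ_{k≠l} αβ·p'_{kl}·q_{kl}/(β·q_{kl}+(1−β)·p'_{kl}) + (1−α)·( −(1+log q_{ij}) + (1−β)·q_{ij}/(β·p'_{ij}+(1−β)·q_{ij}) + log(β·p'_{ij}+(1−β)·q_{ij}) ) + (1−α)·Σ_{k≠l} q_{kl}·( 1+log q_{kl} − (1−β)·q_{kl}/(β·p'_{kl}+(1−β)·q_{kl})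 − log(β·p'_{kl}+(1−β)·q_{kl}) ) ]. -/

import Mathlib

open Real Finset

open InnerProductSpace

/-- Low-dimensional tSNE similarities:
`q_{ij}(Y) = (1+‖y_i−y_j‖²)⁻¹ / Σ_{k≠l} (1+‖y_k−y_l‖²)⁻¹`. -/
noncomputable def qsim {n m : ℕ} (Y : Fin n → EuclideanSpace ℝ (Fin m)) (i j : Fin n) : ℝ :=
  (1 + ‖Y i - Y j‖ ^ 2)⁻¹ /
    ∑ k, ∑ l ∈ Finset.univ.filter (fun l => l ≠ k), (1 + ‖Y k - Y l‖ ^ 2)⁻¹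

section toolkit
variable {F : Type*} [NormedAddCommGroup F] [InnerProductSpace ℝ F] [CompleteSpace F]
variable {f g : F → ℝ} {a b x : F}

theorem HasGradientAt.add' (hf : HasGradientAt f a x) (hg : HasGradientAt g b x) :
    HasGradientAt (fun z => f z + g z) (a + b) x := by
  rw [hasGradientAt_iff_hasFDerivAt] at *
  simpa using hf.fun_add hg

theorem HasGradientAt.sum' {ι : Type*} {s : Finset ι} {f : ι → F → ℝ} {a : ι → F}
    (h : ∀ j ∈ s, HasGradientAt (f j) (a j) x) :
    HasGradientAt (fun z => ∑ j ∈ s, f j z) (∑ j ∈ s, a j) x := by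
  rw [hasGradientAt_iff_hasFDerivAt]
  simpa using HasFDerivAt.fun_sum (fun j hj => (h j hj : HasFDerivAt _ _ _))

theorem HasGradientAt.scomp' (hf : HasGradientAt f a x) {φ : ℝ → ℝ} {c : ℝ}
    (hφ : HasDerivAt φ c (f x)) :
    HasGradientAt (fun z => φ (f z)) (c • a) x := by
  rw [hasGradientAt_iff_hasFDerivAt] at *
  simpa [Function.comp_def] using hφ.comp_hasFDerivAt x hf

theorem HasGradientAt.mul' (hf : HasGradientAt f a x) (hg : HasGradientAt g b x) :
    HasGradientAt (fun z => f z * g z) (f x • b + g x • a) x := by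
  rw [hasGradientAt_iff_hasFDerivAt] at *
  simpa using hf.fun_mul hg

theorem hasGradientAt_norm_sq_sub (c x : F) :
    HasGradientAt (fun z => ‖z - c‖ ^ 2) ((2:ℝ) • (x - c)) x := by
  rw [hasGradientAt_iff_hasFDerivAt]
  have h : HasFDerivAt (fun z : F => z - c) (ContinuousLinearMap.id ℝ F) x :=
    (hasFDerivAt_id x).sub_const c
  convert h.norm_sq using 1
  · rfl
  ext y
  simp [toDual_apply_apply, real_inner_smul_left]

theorem hasGradientAt_inv_one_add_norm (c x : F) :
    HasGradientAt (fun z => (1 + ‖z - c‖ ^ 2)⁻¹)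
      ((-2 * ((1 + ‖x - c‖ ^ 2)⁻¹) ^ 2) • (x - c)) x := by
  have hpos : (0:ℝ) < 1 + ‖x - c‖ ^ 2 := by positivity
  have h2 : HasDerivAt (fun t : ℝ => (1 + t)⁻¹) (-1 / (1 + ‖x - c‖ ^ 2) ^ 2) (‖x - c‖ ^ 2) := by
    simpa using ((hasDerivAt_id (‖x - c‖ ^ 2)).const_add 1).fun_inv hpos.ne'
  have := (hasGradientAt_norm_sq_sub c x).scomp' h2
  convert this using 1
  rw [smul_smul]
  congr 1
  field_simp

theorem hasGradientAt_inv_one_add_norm' (c x : F) :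
    HasGradientAt (fun z => (1 + ‖c - z‖ ^ 2)⁻¹)
      ((-2 * ((1 + ‖x - c‖ ^ 2)⁻¹) ^ 2) • (x - c)) x := by
  apply (hasGradientAt_inv_one_add_norm c x).congr_of_eventuallyEq
  filter_upwards with z
  rw [norm_sub_rev]

end toolkit

theorem Sden_pos {n m : ℕ} (hn : 2 ≤ n) (Y : Fin n → EuclideanSpace ℝ (Fin m)) :
    0 < ∑ k, ∑ l ∈ Finset.univ.filter (fun l => l ≠ k), (1 + ‖Y k - Y l‖ ^ 2)⁻¹ := by
  have hcard : 1 < Fintype.card (Fin n) := by simp; omega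
  have : Nonempty (Fin n) := ⟨⟨0, by omega⟩⟩
  apply Finset.sum_pos _ Finset.univ_nonempty
  intro k _
  apply Finset.sum_pos
  · intro l _; positivity
  · obtain ⟨l, hl⟩ := Fintype.exists_ne_of_one_lt_card hcard k
    exact ⟨l, by simp [hl]⟩

theorem qsim_pos {n m : ℕ} (hn : 2 ≤ n) (Y : Fin n → EuclideanSpace ℝ (Fin m)) (k l : Fin n) :
    0 < qsim Y k l :=
  div_pos (by positivity) (Sden_pos hn Y)

theorem qsim_symm {n m : ℕ} (Y : Fin n → EuclideanSpace ℝ (Fin m)) (k l : Fin n) :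
    qsim Y k l = qsim Y l k := by
  unfold qsim
  rw [norm_sub_rev]

theorem hasDerivAt_phi (α β p a : ℝ) (hp : 0 < p) (hβ0 : 0 < β) (hβ1 : β < 1) (ha : 0 < a) :
    HasDerivAt (fun t => α * (p * Real.log (p / (β * t + (1 - β) * p)))
        + (1 - α) * (t * Real.log (t / (β * p + (1 - β) * t))))
      (-(α * β * p / (β * a + (1 - β) * p))
        + (1 - α) * (Real.log a + 1 - Real.log (β * p + (1 - β) * a)
            - (1 - β) * a / (β * p + (1 - β) * a))) a := by
  have hb' : (0:ℝ) < 1 - β := by linarith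
  have hd1 : 0 < β * a + (1 - β) * p := by nlinarith [mul_pos hβ0 ha, mul_pos hb' hp]
  have hd2 : 0 < β * p + (1 - β) * a := by nlinarith [mul_pos hβ0 hp, mul_pos hb' ha]
  have hL1 : HasDerivAt (fun t : ℝ => β * t + (1 - β) * p) β a := by
    simpa using ((hasDerivAt_id a).const_mul β).add_const ((1 - β) * p)
  have hL2 : HasDerivAt (fun t : ℝ => β * p + (1 - β) * t) (1 - β) a := by
    simpa using ((hasDerivAt_id a).const_mul (1 - β)).const_add (β * p)
  have hlog1 : HasDerivAt (fun t : ℝ => Real.log (β * t + (1 - β) * p)) (β / (β * a + (1 - β) * p)) a :=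
    hL1.log hd1.ne'
  have hlog2 : HasDerivAt (fun t : ℝ => Real.log (β * p + (1 - β) * t)) ((1 - β) / (β * p + (1 - β) * a)) a :=
    hL2.log hd2.ne'
  have hterm1 : HasDerivAt (fun t : ℝ => α * (p * (Real.log p - Real.log (β * t + (1 - β) * p))))
      (α * (p * (0 - β / (β * a + (1 - β) * p)))) a :=
    (((hasDerivAt_const a (Real.log p)).sub hlog1).const_mul p).const_mul α
  have hterm2 : HasDerivAt (fun t : ℝ => (1 - α) * (t * (Real.log t - Real.log (β * p + (1 - β) * t))))
      ((1 - α) * (1 * (Real.log a - Real.log (β * p + (1 - β) * a))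
        + a * (a⁻¹ - (1 - β) / (β * p + (1 - β) * a)))) a :=
    (((hasDerivAt_id a).mul ((Real.hasDerivAt_log ha.ne').sub hlog2)).const_mul (1 - α))
  have hsum := hterm1.add hterm2
  have heq : (fun t : ℝ => α * (p * (Real.log p - Real.log (β * t + (1 - β) * p)))
      + (1 - α) * (t * (Real.log t - Real.log (β * p + (1 - β) * t))))
      =ᶠ[nhds a] (fun t => α * (p * Real.log (p / (β * t + (1 - β) * p)))
        + (1 - α) * (t * Real.log (t / (β * p + (1 - β) * t)))) := by
    filter_upwards [eventually_gt_nhds ha] with t ht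
    have hb' : (0:ℝ) < 1 - β := by linarith
    have h1 : 0 < β * t + (1 - β) * p := by nlinarith [mul_pos hβ0 ht, mul_pos hb' hp]
    have h2 : 0 < β * p + (1 - β) * t := by nlinarith [mul_pos hβ0 hp, mul_pos hb' ht]
    rw [Real.log_div hp.ne' h1.ne', Real.log_div ht.ne' h2.ne']
  have := hsum.congr_of_eventuallyEq heq.symm
  convert this using 1
  · rfl
  · rfl
  field_simp
  ring

noncomputable def Sden {n m : ℕ} (Y : Fin n → EuclideanSpace ℝ (Fin m)) : ℝ :=
  ∑ k, ∑ l ∈ Finset.univ.filter (fun l => l ≠ k), (1 + ‖Y k - Y l‖ ^ 2)⁻¹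

noncomputable def gW {n m : ℕ} (Y : Fin n → EuclideanSpace ℝ (Fin m)) (i k l : Fin n) :
    EuclideanSpace ℝ (Fin m) :=
  if k = i then (-2 * ((1 + ‖Y i - Y l‖ ^ 2)⁻¹) ^ 2) • (Y i - Y l)
  else if l = i then (-2 * ((1 + ‖Y i - Y k‖ ^ 2)⁻¹) ^ 2) • (Y i - Y k)
  else 0

theorem hasGradientAt_W {n m : ℕ} (Y : Fin n → EuclideanSpace ℝ (Fin m)) (i k l : Fin n)
    (hkl : k ≠ l) :
    HasGradientAt (fun z => (1 + ‖Function.update Y i z k - Function.update Y i z l‖ ^ 2)⁻¹)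
      (gW Y i k l) (Y i) := by
  rcases eq_or_ne k i with rfl | hk
  · simp only [gW, if_pos rfl, Function.update_self, Function.update_of_ne hkl.symm]
    exact hasGradientAt_inv_one_add_norm (Y l) (Y k)
  · rcases eq_or_ne l i with rfl | hl
    · simp only [gW, if_neg hk, if_pos rfl, Function.update_self, Function.update_of_ne hk]
      exact hasGradientAt_inv_one_add_norm' (Y k) (Y l)
    · simp only [gW, if_neg hk, if_neg hl, Function.update_of_ne hk, Function.update_of_ne hl]
      exact hasGradientAt_const _ _

theorem hasGradientAt_Sden {n m : ℕ} (Y : Fin n → EuclideanSpace ℝ (Fin m)) (i : Fin n) :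
    HasGradientAt (fun z => Sden (Function.update Y i z))
      (∑ k, ∑ l ∈ Finset.univ.filter (fun l => l ≠ k), gW Y i k l) (Y i) := by
  unfold Sden
  exact HasGradientAt.sum' fun k _ => HasGradientAt.sum' fun l hl =>
    hasGradientAt_W Y i k l ((Finset.mem_filter.1 hl).2).symm

theorem hasGradientAt_qsim {n m : ℕ} (hn : 2 ≤ n) (Y : Fin n → EuclideanSpace ℝ (Fin m))
    (i k l : Fin n) (hkl : k ≠ l) :
    HasGradientAt (fun z => qsim (Function.update Y i z) k l)
      ((Sden Y)⁻¹ • gW Y i k l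
        + (-(qsim Y k l) * (Sden Y)⁻¹) •
            (∑ a, ∑ b ∈ Finset.univ.filter (fun b => b ≠ a), gW Y i a b)) (Y i) := by
  have hupd : Function.update Y i (Y i) = Y := Function.update_eq_self i Y
  have hSpos := Sden_pos hn Y
  have hS := hasGradientAt_Sden Y i
  have hSne : Sden (Function.update Y i (Y i)) ≠ 0 := by rw [hupd]; exact hSpos.ne'
  have hinv := hS.scomp' (hasDerivAt_inv hSne)
  rw [hupd] at hinv
  have hW := hasGradientAt_W Y i k l hkl
  have hmul := hW.mul' hinv
  rw [hupd] at hmul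
  have hfun : (fun z => qsim (Function.update Y i z) k l)
      = fun z => (1 + ‖Function.update Y i z k - Function.update Y i z l‖ ^ 2)⁻¹ *
          (Sden (Function.update Y i z))⁻¹ := by
    funext z
    simp [qsim, Sden, div_eq_mul_inv]
  rw [hfun]
  convert hmul using 1
  rw [add_comm, smul_smul]
  congr 2
  have : qsim Y k l = (1 + ‖Y k - Y l‖ ^ 2)⁻¹ / Sden Y := rfl
  rw [this]
  field_simp

theorem gW_sum {n m : ℕ} (Y : Fin n → EuclideanSpace ℝ (Fin m)) (i : Fin n)
    (c : Fin n → Fin n → ℝ) (hc : ∀ j, c i j = c j i) :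
    ∑ k, ∑ l ∈ Finset.univ.filter (fun l => l ≠ k), c k l • gW Y i k l
      = ∑ j ∈ Finset.univ.filter (fun j => j ≠ i),
          (-4 * ((1 + ‖Y i - Y j‖ ^ 2)⁻¹) ^ 2 * c i j) • (Y i - Y j) := by
  simp only [Finset.filter_ne']
  rw [← Finset.sum_erase_add Finset.univ _ (Finset.mem_univ i)]
  have h1 : ∀ k ∈ Finset.univ.erase i,
      (∑ l ∈ Finset.univ.erase k, c k l • gW Y i k l) = c k i • gW Y i k i := by
    intro k hk
    have hki : k ≠ i := (Finset.mem_erase.1 hk).1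
    apply Finset.sum_eq_single_of_mem i (Finset.mem_erase.2 ⟨hki.symm.symm.symm, Finset.mem_univ i⟩)
    intro l hl hli
    simp [gW, hki, hli]
  rw [Finset.sum_congr rfl h1, ← Finset.sum_add_distrib]
  apply Finset.sum_congr rfl
  intro j hj
  have hji : j ≠ i := (Finset.mem_erase.1 hj).1
  rw [← hc j]
  simp only [gW, if_neg hji, if_pos rfl, if_true, smul_smul, ← add_smul]
  congr 1
  ring

noncomputable def Afun (α β p q : ℝ) : ℝ :=
  -(α * β * p / (β * q + (1 - β) * p))
    + (1 - α) * (Real.log q + 1 - Real.log (β * p + (1 - β) * q)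
        - (1 - β) * q / (β * p + (1 - β) * q))

theorem hasGradientAt_pair {n m : ℕ} (hn : 2 ≤ n) (α β : ℝ) (hβ0 : 0 < β) (hβ1 : β < 1)
    (Y : Fin n → EuclideanSpace ℝ (Fin m)) (i k l : Fin n) (hkl : k ≠ l) (p : ℝ) (hp : 0 < p) :
    HasGradientAt (fun z =>
        α * (p * Real.log (p / (β * qsim (Function.update Y i z) k l + (1 - β) * p)))
          + (1 - α) * (qsim (Function.update Y i z) k l *
              Real.log (qsim (Function.update Y i z) k l /
                (β * p + (1 - β) * qsim (Function.update Y i z) k l))))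
      (Afun α β p (qsim Y k l) • ((Sden Y)⁻¹ • gW Y i k l
        + (-(qsim Y k l) * (Sden Y)⁻¹) •
            ∑ a, ∑ b ∈ Finset.univ.filter (fun b => b ≠ a), gW Y i a b)) (Y i) := by
  have hq := hasGradientAt_qsim hn Y i k l hkl
  have hq0 : 0 < qsim (Function.update Y i (Y i)) k l := by
    rw [Function.update_eq_self]; exact qsim_pos hn Y k l
  have hφ := hasDerivAt_phi α β p _ hp hβ0 hβ1 hq0
  have hcomp := hq.scomp' hφ
  rw [Function.update_eq_self] at hcomp
  simp only [Afun]
  exact hcomp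

/-- The parameterized Jensen–Shannon divergence between the prior similarities `p'` and
the embedding similarities `q(Y)` as a function of the embedding `Y`:
`J(Y) = α·Σ_{i≠j} p'_{ij}·log(p'_{ij}/(β·q_{ij}+(1−β)·p'_{ij}))
      + (1−α)·Σ_{i≠j} q_{ij}·log(q_{ij}/(β·p'_{ij}+(1−β)·q_{ij}))`. -/
noncomputable def jediJS {n m : ℕ} (α β : ℝ) (p' : Fin n → Fin n → ℝ)
    (Y : Fin n → EuclideanSpace ℝ (Fin m)) : ℝ :=
  α * ∑ i, ∑ j ∈ Finset.univ.filter (fun j => j ≠ i),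
        p' i j * Real.log (p' i j / (β * qsim Y i j + (1 - β) * p' i j))
    + (1 - α) * ∑ i, ∑ j ∈ Finset.univ.filter (fun j => j ≠ i),
        qsim Y i j * Real.log (qsim Y i j / (β * p' i j + (1 - β) * qsim Y i j))

/-- The pJSD term of the Jedi objective is differentiable in the embedding `Y`, and its
gradient with respect to `y_i` is given by the closed-form expression derived in the
paper. -/
theorem jedi_gradient {n m : ℕ} (hn : 2 ≤ n)
    (α β : ℝ) (hα0 : 0 ≤ α) (hα1 : α ≤ 1) (hβ0 : 0 < β) (hβ1 : β < 1)
    (p' : Fin n → Fin n → ℝ)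
    (hp_pos : ∀ i j, i ≠ j → 0 < p' i j)
    (hp_symm : ∀ i j, p' i j = p' j i)
    (hp_sum : ∑ i, ∑ j ∈ Finset.univ.filter (fun j => j ≠ i), p' i j = 1) :
    Differentiable ℝ (fun Y : Fin n → EuclideanSpace ℝ (Fin m) => jediJS α β p' Y) ∧
    ∀ (Y : Fin n → EuclideanSpace ℝ (Fin m)) (i : Fin n),
      HasGradientAt (fun z => jediJS α β p' (Function.update Y i z))
        ((4 : ℝ) • ∑ j ∈ Finset.univ.filter (fun j => j ≠ i),
          ((1 + ‖Y i - Y j‖ ^ 2)⁻¹ * qsim Y i j *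
            (α * β * p' i j / (β * qsim Y i j + (1 - β) * p' i j)
              - (∑ k, ∑ l ∈ Finset.univ.filter (fun l => l ≠ k),
                  α * β * p' k l * qsim Y k l / (β * qsim Y k l + (1 - β) * p' k l))
              + (1 - α) *
                (-(1 + Real.log (qsim Y i j))
                  + (1 - β) * qsim Y i j / (β * p' i j + (1 - β) * qsim Y i j)
                  + Real.log (β * p' i j + (1 - β) * qsim Y i j))
              + (1 - α) *
                (∑ k, ∑ l ∈ Finset.univ.filter (fun l => l ≠ k),
                  qsim Y k l *
                    (1 + Real.log (qsim Y k l)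
                      - (1 - β) * qsim Y k l / (β * p' k l + (1 - β) * qsim Y k l)
                      - Real.log (β * p' k l + (1 - β) * qsim Y k l))))) •
            (Y i - Y j))
        (Y i) := by
  have hb' : (0:ℝ) < 1 - β := by linarith
  constructor
  · -- Differentiability
    have hwd : ∀ k l : Fin n, Differentiable ℝ
        (fun Y : Fin n → EuclideanSpace ℝ (Fin m) => (1 + ‖Y k - Y l‖ ^ 2)⁻¹) := by
      intro k l
      have hk : Differentiable ℝ (fun Y : Fin n → EuclideanSpace ℝ (Fin m) => Y k) :=
        (ContinuousLinearMap.proj (R := ℝ) (φ := fun _ : Fin n => EuclideanSpace ℝ (Fin m)) k).differentiable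
      have hl : Differentiable ℝ (fun Y : Fin n → EuclideanSpace ℝ (Fin m) => Y l) :=
        (ContinuousLinearMap.proj (R := ℝ) (φ := fun _ : Fin n => EuclideanSpace ℝ (Fin m)) l).differentiable
      have h2 : Differentiable ℝ (fun Y : Fin n → EuclideanSpace ℝ (Fin m) => ‖Y k - Y l‖ ^ 2) :=
        ((contDiff_norm_sq ℝ (n := ⊤)).differentiable (by simp)).comp (hk.sub hl)
      exact ((differentiable_const (1:ℝ)).add h2).inv (fun Y => (by positivity : (0:ℝ) < 1 + ‖Y k - Y l‖ ^ 2).ne')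
    have hSd : Differentiable ℝ (fun Y : Fin n → EuclideanSpace ℝ (Fin m) => Sden Y) := by
      unfold Sden
      exact Differentiable.fun_sum fun k _ => Differentiable.fun_sum fun l _ => hwd k l
    have hSne : ∀ Y : Fin n → EuclideanSpace ℝ (Fin m), Sden Y ≠ 0 :=
      fun Y => (Sden_pos hn Y).ne'
    have hqd : ∀ k l : Fin n,
        Differentiable ℝ (fun Y : Fin n → EuclideanSpace ℝ (Fin m) => qsim Y k l) := by
      intro k l
      have : Differentiable ℝ (fun Y : Fin n → EuclideanSpace ℝ (Fin m) =>
          (1 + ‖Y k - Y l‖ ^ 2)⁻¹ * (Sden Y)⁻¹) := (hwd k l).mul (hSd.inv hSne)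
      show Differentiable ℝ (fun Y : Fin n → EuclideanSpace ℝ (Fin m) =>
        (1 + ‖Y k - Y l‖ ^ 2)⁻¹ / Sden Y)
      simpa only [div_eq_mul_inv] using this
    unfold jediJS
    apply Differentiable.add
    · apply Differentiable.const_mul
      apply Differentiable.fun_sum; intro i _
      apply Differentiable.fun_sum; intro j hj
      have hj' : j ≠ i := (Finset.mem_filter.1 hj).2
      have hp := hp_pos i j hj'.symm
      have hden : ∀ Y : Fin n → EuclideanSpace ℝ (Fin m),
          β * qsim Y i j + (1 - β) * p' i j ≠ 0 := fun Y => by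
        have hq := qsim_pos hn Y i j
        nlinarith [mul_pos hβ0 hq, mul_pos hb' hp]
      have hinner : Differentiable ℝ (fun Y : Fin n → EuclideanSpace ℝ (Fin m) =>
          p' i j / (β * qsim Y i j + (1 - β) * p' i j)) := by
        simp only [div_eq_mul_inv]
        exact (differentiable_const _).mul
          ((((hqd i j).const_mul β).add (differentiable_const _)).inv hden)
      exact (hinner.log fun Y => div_ne_zero hp.ne' (hden Y)).const_mul _
    · apply Differentiable.const_mul
      apply Differentiable.fun_sum; intro i _
      apply Differentiable.fun_sum; intro j hj
      have hj' : j ≠ i := (Finset.mem_filter.1 hj).2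
      have hp := hp_pos i j hj'.symm
      have hden : ∀ Y : Fin n → EuclideanSpace ℝ (Fin m),
          β * p' i j + (1 - β) * qsim Y i j ≠ 0 := fun Y => by
        have hq := qsim_pos hn Y i j
        nlinarith [mul_pos hβ0 hp, mul_pos hb' hq]
      have hinner : Differentiable ℝ (fun Y : Fin n → EuclideanSpace ℝ (Fin m) =>
          qsim Y i j / (β * p' i j + (1 - β) * qsim Y i j)) := by
        simp only [div_eq_mul_inv]
        exact (hqd i j).mul
          (((differentiable_const _).add ((hqd i j).const_mul _)).inv hden)
      exact (hqd i j).mul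
        (hinner.log fun Y => div_ne_zero (qsim_pos hn Y i j).ne' (hden Y))
  · intro Y i
    have hfun : ∀ z, jediJS α β p' (Function.update Y i z)
        = ∑ k, ∑ l ∈ Finset.univ.filter (fun l => l ≠ k),
            (α * (p' k l * Real.log (p' k l /
                (β * qsim (Function.update Y i z) k l + (1 - β) * p' k l)))
              + (1 - α) * (qsim (Function.update Y i z) k l *
                  Real.log (qsim (Function.update Y i z) k l /
                    (β * p' k l + (1 - β) * qsim (Function.update Y i z) k l)))) := by
      intro z
      unfold jediJS
      simp only [Finset.mul_sum]
      rw [← Finset.sum_add_distrib]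
      exact Finset.sum_congr rfl fun k _ => Finset.sum_add_distrib.symm
    have hG : HasGradientAt
        (fun z => ∑ k, ∑ l ∈ Finset.univ.filter (fun l => l ≠ k),
            (α * (p' k l * Real.log (p' k l /
                (β * qsim (Function.update Y i z) k l + (1 - β) * p' k l)))
              + (1 - α) * (qsim (Function.update Y i z) k l *
                  Real.log (qsim (Function.update Y i z) k l /
                    (β * p' k l + (1 - β) * qsim (Function.update Y i z) k l)))))
        (∑ k, ∑ l ∈ Finset.univ.filter (fun l => l ≠ k),
          Afun α β (p' k l) (qsim Y k l) • ((Sden Y)⁻¹ • gW Y i k l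
            + (-(qsim Y k l) * (Sden Y)⁻¹) •
                ∑ a, ∑ b ∈ Finset.univ.filter (fun b => b ≠ a), gW Y i a b)) (Y i) :=
      HasGradientAt.sum' fun k _ => HasGradientAt.sum' fun l hl =>
        hasGradientAt_pair hn α β hβ0 hβ1 Y i k l ((Finset.mem_filter.1 hl).2).symm
          (p' k l) (hp_pos k l ((Finset.mem_filter.1 hl).2).symm)
    have hG' := hG.congr_of_eventuallyEq (Filter.Eventually.of_forall hfun)
    -- now identify the gradient vectors
    have hsym : ∀ j : Fin n,
        Afun α β (p' i j) (qsim Y i j) * (Sden Y)⁻¹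
          = Afun α β (p' j i) (qsim Y j i) * (Sden Y)⁻¹ := by
      intro j; rw [hp_symm i j, qsim_symm Y i j]
    have hgS : (∑ a, ∑ b ∈ Finset.univ.filter (fun b => b ≠ a), gW Y i a b)
        = ∑ j ∈ Finset.univ.filter (fun j => j ≠ i),
            (-4 * ((1 + ‖Y i - Y j‖ ^ 2)⁻¹) ^ 2) • (Y i - Y j) := by
      simpa using gW_sum Y i (fun _ _ => 1) (fun _ => rfl)
    have hsum2 : (∑ k, ∑ l ∈ Finset.univ.filter (fun l => l ≠ k),
          Afun α β (p' k l) (qsim Y k l) * (-(qsim Y k l) * (Sden Y)⁻¹))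
        = -(Sden Y)⁻¹ * ∑ k, ∑ l ∈ Finset.univ.filter (fun l => l ≠ k),
            Afun α β (p' k l) (qsim Y k l) * qsim Y k l := by
      simp only [Finset.mul_sum]
      exact Finset.sum_congr rfl fun k _ => Finset.sum_congr rfl fun l _ => by ring
    have hT : (∑ k, ∑ l ∈ Finset.univ.filter (fun l => l ≠ k),
          Afun α β (p' k l) (qsim Y k l) * qsim Y k l)
        = -(∑ k, ∑ l ∈ Finset.univ.filter (fun l => l ≠ k),
              α * β * p' k l * qsim Y k l / (β * qsim Y k l + (1 - β) * p' k l))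
          + (1 - α) * (∑ k, ∑ l ∈ Finset.univ.filter (fun l => l ≠ k),
              qsim Y k l * (1 + Real.log (qsim Y k l)
                - (1 - β) * qsim Y k l / (β * p' k l + (1 - β) * qsim Y k l)
                - Real.log (β * p' k l + (1 - β) * qsim Y k l))) := by
      simp only [Finset.mul_sum, ← Finset.sum_neg_distrib, ← Finset.sum_add_distrib]
      exact Finset.sum_congr rfl fun k _ => Finset.sum_congr rfl fun l _ => by
        simp only [Afun]; ring
    convert hG' using 2
    simp only [smul_add, smul_smul, Finset.sum_add_distrib]
    rw [gW_sum Y i (fun k l => Afun α β (p' k l) (qsim Y k l) * (Sden Y)⁻¹) hsym]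
    simp only [← Finset.sum_smul]
    rw [hsum2, hT, hgS, Finset.smul_sum]
    simp only [Finset.smul_sum, smul_smul]
    rw [← Finset.sum_add_distrib]
    apply Finset.sum_congr rfl
    intro j hj
    have hji : j ≠ i := (Finset.mem_filter.1 hj).2
    rw [← add_smul]
    congr 1
    have hq_ij : qsim Y i j = (1 + ‖Y i - Y j‖ ^ 2)⁻¹ / Sden Y := rfl
    simp only [Afun]
    rw [hq_ij]
    ring
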